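/- Let Λ, η, κ > 0, Ψ ≥ 0, and let e_q, e_ω ∈ ℝ³ satisfy ‖e_q‖² ≤ Ψ ≤ 2‖e_q‖². Define the sliding variable s = (Λ+Ψ)e_q + η e_ω, the Lyapunov function V = (1/2)sᵀs + κΨ, and the vector z_q = (‖e_q‖, ‖e_ω‖) ∈ ℝ². Then z_qᵀ W₁ z_q ≤ V ≤ z_qᵀ W₂ z_q, where W₁ = [[(Λ+Ψ)²/2 + κ, −(Λ+Ψ)η/2], [−(Λ+Ψ)η/2, η²/2]] and W₂ = [[(Λ+Ψ)²/2 + 2κ, (Λ+Ψ)η/2], [(Λ+Ψ)η/2, η²/2]]. -/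

import Mathlib

open Matrix

/-- Sandwich bounds for the Lyapunov candidate: with `s = (Λ+Ψ)e_q + η e_ω`,
`V = ½ sᵀs + κΨ` and `z_q = (‖e_q‖, ‖e_ω‖)`, one has
`z_qᵀ W₁ z_q ≤ V ≤ z_qᵀ W₂ z_q`. -/
theorem lyapunov_sandwich (Λ η κ Ψ : ℝ) (hΛ : 0 < Λ) (hη : 0 < η) (hκ : 0 < κ)
    (hΨ : 0 ≤ Ψ) (eq eω : EuclideanSpace ℝ (Fin 3))
    (hΨl : ‖eq‖ ^ 2 ≤ Ψ) (hΨu : Ψ ≤ 2 * ‖eq‖ ^ 2)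
    (s : EuclideanSpace ℝ (Fin 3)) (hs : s = (Λ + Ψ) • eq + η • eω)
    (V : ℝ) (hV : V = (1 / 2) * ‖s‖ ^ 2 + κ * Ψ)
    (zq : Fin 2 → ℝ) (hzq : zq = ![‖eq‖, ‖eω‖])
    (W₁ W₂ : Matrix (Fin 2) (Fin 2) ℝ)
    (hW₁ : W₁ = !![(Λ + Ψ) ^ 2 / 2 + κ, -(Λ + Ψ) * η / 2;
                   -(Λ + Ψ) * η / 2, η ^ 2 / 2])
    (hW₂ : W₂ = !![(Λ + Ψ) ^ 2 / 2 + 2 * κ, (Λ + Ψ) * η / 2;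
                   (Λ + Ψ) * η / 2, η ^ 2 / 2]) :
    zq ⬝ᵥ W₁.mulVec zq ≤ V ∧ V ≤ zq ⬝ᵥ W₂.mulVec zq := by
  have hsn : ‖s‖ ^ 2 = (Λ + Ψ) ^ 2 * ‖eq‖ ^ 2
      + 2 * (Λ + Ψ) * η * (inner ℝ eq eω : ℝ) + η ^ 2 * ‖eω‖ ^ 2 := by
    rw [hs, norm_add_sq_real, norm_smul, norm_smul, real_inner_smul_left,
      real_inner_smul_right, mul_pow, mul_pow]
    simp only [Real.norm_eq_abs, sq_abs]
    ring
  have hcs := abs_real_inner_le_norm eq eω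
  have hcs1 : (inner ℝ eq eω : ℝ) ≤ ‖eq‖ * ‖eω‖ := (abs_le.mp hcs).2
  have hcs2 : -(‖eq‖ * ‖eω‖) ≤ (inner ℝ eq eω : ℝ) := (abs_le.mp hcs).1
  have hQ1 : zq ⬝ᵥ W₁.mulVec zq =
      ((Λ + Ψ) ^ 2 / 2 + κ) * ‖eq‖ ^ 2 - (Λ + Ψ) * η * (‖eq‖ * ‖eω‖)
        + η ^ 2 / 2 * ‖eω‖ ^ 2 := by
    simp [hzq, hW₁, Matrix.mulVec, dotProduct, Fin.sum_univ_two]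
    ring
  have hQ2 : zq ⬝ᵥ W₂.mulVec zq =
      ((Λ + Ψ) ^ 2 / 2 + 2 * κ) * ‖eq‖ ^ 2 + (Λ + Ψ) * η * (‖eq‖ * ‖eω‖)
        + η ^ 2 / 2 * ‖eω‖ ^ 2 := by
    simp [hzq, hW₂, Matrix.mulVec, dotProduct, Fin.sum_univ_two]
    ring
  have hc : 0 < Λ + Ψ := by linarith
  constructor
  · rw [hQ1, hV, hsn]
    nlinarith [mul_pos hc hη, hκ.le]
  · rw [hQ2, hV, hsn]
    nlinarith [mul_pos hc hη, hκ.le]
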